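/- If additionally a positive semi-definite damping matrix D is present, i.e., θ_i satisfies (θ_i − θ_γ)/δ − v + M⁻¹D(θ_i − θ_γ) + δ·M⁻¹∇P̄(θ_i) = r with ‖Mr/δ‖ ≤ ε and P̄ L-weakly convex, then the same one-step Hamiltonian bound holds: H_i − H_γ ≤ ((Lδ² + δ)/(2σ_min(M)))·‖(θ_i − θ_γ)/δ‖²_M + δε²/2. -/

import Mathlib

open Matrix

/-- One-step Hamiltonian bound in the presence of a positive semi-definite
damping matrix `D`. -/
theorem stmt8 {n : ℕ} (M : Matrix (Fin n) (Fin n) ℝ) (hMsymm : M.IsSymm)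
    (σ : ℝ) (hσ : 0 < σ)
    (hMlb : ∀ x : Fin n → ℝ, σ * (x ⬝ᵥ x) ≤ x ⬝ᵥ (M *ᵥ x))
    (D : Matrix (Fin n) (Fin n) ℝ) (hDsymm : D.IsSymm)
    (hDpsd : ∀ x : Fin n → ℝ, 0 ≤ x ⬝ᵥ (D *ᵥ x))
    (P : (Fin n → ℝ) → ℝ) (gradP : (Fin n → ℝ) → (Fin n → ℝ)) (L : ℝ) (hL : 0 < L)
    (hweak : ∀ x y : Fin n → ℝ,
      P y - P x - ((y - x) ⬝ᵥ gradP y) ≤ L / 2 * ((y - x) ⬝ᵥ (y - x)))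
    (ε δ : ℝ) (hε : 0 < ε) (hδ : 0 < δ)
    (θi θγ v r : Fin n → ℝ)
    (heq : δ⁻¹ • (θi - θγ) - v + M⁻¹ *ᵥ (D *ᵥ (θi - θγ))
            + δ • (M⁻¹ *ᵥ gradP θi) = r)
    (hr : Real.sqrt ((M *ᵥ r) ⬝ᵥ (M *ᵥ r)) / δ ≤ ε) :
    ((1 : ℝ) / 2 * ((δ⁻¹ • (θi - θγ)) ⬝ᵥ (M *ᵥ (δ⁻¹ • (θi - θγ)))) + P θi) -
    ((1 : ℝ) / 2 * (v ⬝ᵥ (M *ᵥ v)) + P θγ) ≤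
      (L * δ ^ 2 + δ) / (2 * σ) *
        ((δ⁻¹ • (θi - θγ)) ⬝ᵥ (M *ᵥ (δ⁻¹ • (θi - θγ)))) + δ * ε ^ 2 / 2 := by
  have hδ0 : (δ : ℝ) ≠ 0 := ne_of_gt hδ
  set u : Fin n → ℝ := δ⁻¹ • (θi - θγ) with hu
  have hθ : θi - θγ = δ • u := by
    rw [hu, smul_smul, mul_inv_cancel₀ hδ0, one_smul]
  -- nonnegativity of dot product with itself
  have hself : ∀ x : Fin n → ℝ, 0 ≤ x ⬝ᵥ x := fun x =>
    Finset.sum_nonneg fun i _ => mul_self_nonneg _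
  -- symmetry of the bilinear form
  have hsym : ∀ x y : Fin n → ℝ, x ⬝ᵥ (M *ᵥ y) = y ⬝ᵥ (M *ᵥ x) := by
    intro x y
    rw [Matrix.dotProduct_mulVec, ← Matrix.mulVec_transpose, hMsymm.eq,
      dotProduct_comm]
  -- M is positive definite, hence invertible
  have hMpos : M.PosDef := by
    rw [Matrix.posDef_iff_dotProduct_mulVec]
    constructor
    · rw [Matrix.IsHermitian, Matrix.conjTranspose_eq_transpose_of_trivial]
      exact hMsymm
    · intro x hx
      have hsx : star x = x := by ext i; simp
      rw [hsx]
      have h1 : 0 < x ⬝ᵥ x :=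
        lt_of_le_of_ne (hself x) fun h => hx (dotProduct_self_eq_zero.mp h.symm)
      calc (0 : ℝ) < σ * (x ⬝ᵥ x) := by positivity
        _ ≤ x ⬝ᵥ (M *ᵥ x) := hMlb x
  have hdet : IsUnit M.det := (Matrix.isUnit_iff_isUnit_det M).1 hMpos.isUnit
  have hMinv : ∀ z : Fin n → ℝ, M *ᵥ (M⁻¹ *ᵥ z) = z := by
    intro z
    rw [Matrix.mulVec_mulVec, Matrix.mul_nonsing_inv _ hdet, Matrix.one_mulVec]
  -- multiply the update equation by M and dot with u
  have key : M *ᵥ u - M *ᵥ v + D *ᵥ (θi - θγ) + δ • gradP θi = M *ᵥ r := by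
    have h := congrArg (fun z => M *ᵥ z) heq
    simp only [Matrix.mulVec_sub, Matrix.mulVec_add, Matrix.mulVec_smul, hMinv] at h
    rw [← Matrix.mulVec_sub D] at h
    exact h
  have hKu : u ⬝ᵥ (M *ᵥ u) - u ⬝ᵥ (M *ᵥ v) + u ⬝ᵥ (D *ᵥ (θi - θγ))
      + δ * (u ⬝ᵥ gradP θi) = u ⬝ᵥ (M *ᵥ r) := by
    have h := congrArg (fun z => u ⬝ᵥ z) key
    simpa [dotProduct_sub, dotProduct_add, dotProduct_smul,
      smul_eq_mul] using h
  -- damping term is nonnegative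
  have hDterm : 0 ≤ u ⬝ᵥ (D *ᵥ (θi - θγ)) := by
    rw [hθ, Matrix.mulVec_smul, dotProduct_smul, smul_eq_mul]
    exact mul_nonneg hδ.le (hDpsd u)
  -- expansion of (u-v)ᵀ M (u-v)
  have hexp : (u - v) ⬝ᵥ (M *ᵥ (u - v)) =
      u ⬝ᵥ (M *ᵥ u) - 2 * (u ⬝ᵥ (M *ᵥ v)) + v ⬝ᵥ (M *ᵥ v) := by
    rw [Matrix.mulVec_sub, sub_dotProduct, dotProduct_sub,
      dotProduct_sub, hsym v u]
    ring
  have hpsdw : 0 ≤ (u - v) ⬝ᵥ (M *ᵥ (u - v)) :=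
    le_trans (mul_nonneg hσ.le (hself _)) (hMlb _)
  -- weak convexity applied at (θγ, θi)
  have hP := hweak θγ θi
  have hPg : (θi - θγ) ⬝ᵥ gradP θi = δ * (u ⬝ᵥ gradP θi) := by
    rw [hθ, smul_dotProduct, smul_eq_mul]
  have hPd : (θi - θγ) ⬝ᵥ (θi - θγ) = δ ^ 2 * (u ⬝ᵥ u) := by
    rw [hθ, smul_dotProduct, dotProduct_smul, smul_eq_mul, smul_eq_mul]
    ring
  -- Cauchy-Schwarz
  have hcs : u ⬝ᵥ (M *ᵥ r) ≤ Real.sqrt (u ⬝ᵥ u) * Real.sqrt ((M *ᵥ r) ⬝ᵥ (M *ᵥ r)) := by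
    set y := M *ᵥ r
    have h1 : (u ⬝ᵥ y) ^ 2 ≤ (u ⬝ᵥ u) * (y ⬝ᵥ y) := by
      have := Finset.sum_mul_sq_le_sq_mul_sq Finset.univ u y
      simpa [dotProduct, sq, Finset.mul_sum, mul_comm, mul_left_comm,
        mul_assoc] using this
    calc u ⬝ᵥ y ≤ |u ⬝ᵥ y| := le_abs_self _
      _ = Real.sqrt ((u ⬝ᵥ y) ^ 2) := (Real.sqrt_sq_eq_abs _).symm
      _ ≤ Real.sqrt ((u ⬝ᵥ u) * (y ⬝ᵥ y)) := Real.sqrt_le_sqrt h1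
      _ = Real.sqrt (u ⬝ᵥ u) * Real.sqrt (y ⬝ᵥ y) := Real.sqrt_mul (hself u) _
  have hMr : Real.sqrt ((M *ᵥ r) ⬝ᵥ (M *ᵥ r)) ≤ δ * ε := by
    rw [div_le_iff₀ hδ] at hr
    linarith [hr]
  -- abbreviations
  set a := u ⬝ᵥ (M *ᵥ u) with ha
  set b := v ⬝ᵥ (M *ᵥ v) with hb
  set s := u ⬝ᵥ u with hs
  have hsσ : σ * s ≤ a := hMlb u
  have hs0 : 0 ≤ s := hself u
  have hsq : Real.sqrt s ^ 2 = s := Real.sq_sqrt hs0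
  have hsqnn : 0 ≤ Real.sqrt s := Real.sqrt_nonneg _
  -- bound u ⬝ᵥ M r
  have hq : u ⬝ᵥ (M *ᵥ r) ≤ δ / 2 * s + δ * ε ^ 2 / 2 := by
    have h1 : u ⬝ᵥ (M *ᵥ r) ≤ Real.sqrt s * (δ * ε) := by
      refine le_trans hcs ?_
      exact mul_le_mul_of_nonneg_left hMr hsqnn
    nlinarith [sq_nonneg (Real.sqrt s - ε), hδ.le]
  -- the division step
  have hlast : (L * δ ^ 2 + δ) / 2 * s ≤ (L * δ ^ 2 + δ) / (2 * σ) * a := by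
    have hco : 0 ≤ L * δ ^ 2 + δ := by positivity
    have hkey : (L * δ ^ 2 + δ) / (2 * σ) * a - (L * δ ^ 2 + δ) / 2 * s
        = (L * δ ^ 2 + δ) / (2 * σ) * (a - σ * s) := by
      field_simp
    linarith [hkey, mul_nonneg (div_nonneg hco (by positivity : (0:ℝ) ≤ 2 * σ)) (sub_nonneg.mpr hsσ)]
  -- combine everything
  have hmain : 1 / 2 * a + P θi - (1 / 2 * b + P θγ) ≤
      (L * δ ^ 2 + δ) / 2 * s + δ * ε ^ 2 / 2 := by
    rw [hPg, hPd] at hP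
    linarith [hKu, hDterm, hexp, hpsdw, hq, hP]
  linarith [hmain, hlast]
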